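/- arXiv:1601.05577 — 2 statements merged into one kernel-verified Lean document; each statement's English description precedes it below -/
import Mathlib

section
/- For |q| < 1 and |t| < 1, the sum over n ≥ 0 of t^n / ((1-q)(1-q^2)···(1-q^n)) equals the infinite product 1 / ∏_{k≥0} (1 - t q^k). (Euler's q-exponential identity.) -/
open scoped BigOperators

noncomputable def qPoch (q : ℂ) (n : ℕ) : ℂ := ∏ k ∈ Finset.range n, (1 - q ^ (k + 1))

noncomputable def qPochInf (q : ℂ) : ℂ := ∏' k : ℕ, (1 - q ^ (k + 1))

noncomputable def hseries (b : ℕ) (q : ℂ) : ℂ :=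
  ∑' n : ℤ, (if Odd b then (-1 : ℂ) ^ n else if 0 ≤ n then 1 else -1) *
    q ^ ((b : ℤ) * n * (n + 1) / 2 - n)

-- factors nonzero
lemma euler_aux_factor_ne (x : ℂ) (hx : ‖x‖ < 1) : (1 : ℂ) - x ≠ 0 := by
  intro h
  have : x = 1 := by linear_combination -h
  rw [this] at hx; simp at hx

lemma euler_aux_qPoch_ne (q : ℂ) (hq : ‖q‖ < 1) (n : ℕ) : qPoch q n ≠ 0 := by
  refine Finset.prod_ne_zero_iff.2 fun k _ => euler_aux_factor_ne _ ?_
  rw [norm_pow]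
  calc ‖q‖ ^ (k + 1) ≤ ‖q‖ ^ 1 := by
        apply pow_le_pow_of_le_one (norm_nonneg q) hq.le
        omega
    _ < 1 := by simpa using hq

-- 1 - y ≥ exp(-(y/(1-r)))
lemma euler_aux_exp_le (r y : ℝ) (h0 : 0 ≤ y) (hyr : y ≤ r) (hr : r < 1) :
    Real.exp (-(y / (1 - r))) ≤ 1 - y := by
  have hy1 : y < 1 := lt_of_le_of_lt hyr hr
  have h1y : (0:ℝ) < 1 - y := by linarith
  have h1r : (0:ℝ) < 1 - r := by linarith
  have h1 : 1 / (1 - y) ≤ Real.exp (y / (1 - r)) := by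
    have e1 : 1 / (1 - y) = 1 + y / (1 - y) := by field_simp; ring
    have e2 : y / (1 - y) ≤ y / (1 - r) := by
      gcongr
    have e3 : y / (1 - r) + 1 ≤ Real.exp (y / (1 - r)) := Real.add_one_le_exp _
    linarith
  rw [Real.exp_neg]
  have hexp : (0:ℝ) < Real.exp (y / (1 - r)) := Real.exp_pos _
  rw [inv_le_comm₀ hexp h1y]
  rwa [one_div] at h1

-- lower bound on |qPoch|
lemma euler_aux_qPoch_lb (q : ℂ) (hq : ‖q‖ < 1) (n : ℕ) :
    Real.exp (-(‖q‖ / (1 - ‖q‖) ^ 2)) ≤ ‖qPoch q n‖ := by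
  set r := ‖q‖ with hr
  have hr0 : 0 ≤ r := norm_nonneg q
  have h1r : (0:ℝ) < 1 - r := by linarith
  have hnorm : ‖qPoch q n‖ = ∏ k ∈ Finset.range n, ‖(1:ℂ) - q ^ (k+1)‖ := by
    rw [qPoch]; exact norm_prod _ _
  have step1 : ∀ k ∈ Finset.range n,
      Real.exp (-(r ^ (k+1) / (1 - r))) ≤ ‖(1:ℂ) - q ^ (k+1)‖ := by
    intro k _
    have hle : 1 - r ^ (k+1) ≤ ‖(1:ℂ) - q ^ (k+1)‖ := by
      have := norm_sub_norm_le (1:ℂ) (q ^ (k+1))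
      simpa [norm_pow] using this
    refine le_trans ?_ hle
    exact euler_aux_exp_le r (r ^ (k+1)) (pow_nonneg hr0 _)
      (pow_le_of_le_one hr0 hq.le (Nat.succ_ne_zero k)) hq
  calc Real.exp (-(r / (1 - r) ^ 2))
      ≤ Real.exp (∑ k ∈ Finset.range n, -(r ^ (k+1) / (1 - r))) := by
        apply Real.exp_le_exp.2
        have hs : Summable (fun k : ℕ => r ^ (k+1)) := by
          simpa [pow_succ, mul_comm] using (summable_geometric_of_lt_one hr0 hq).mul_left r
        have hsum : ∑ k ∈ Finset.range n, r ^ (k+1) ≤ r / (1 - r) := by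
          calc ∑ k ∈ Finset.range n, r ^ (k+1)
              ≤ ∑' k : ℕ, r ^ (k+1) := Summable.sum_le_tsum _ (fun k _ => pow_nonneg hr0 _) hs
            _ = r * ∑' k : ℕ, r ^ k := by
                rw [← tsum_mul_left]; congr 1; ext k; ring
            _ = r / (1 - r) := by
                rw [tsum_geometric_of_lt_one hr0 hq]; rw [div_eq_mul_inv]
        have e2 : ∑ k ∈ Finset.range n, -(r ^ (k + 1) / (1 - r))
            = -((∑ k ∈ Finset.range n, r ^ (k+1)) / (1 - r)) := by
          rw [Finset.sum_div]; exact Finset.sum_neg_distrib _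
        rw [e2, neg_le_neg_iff,
          show r / (1-r)^2 = (r/(1-r))/(1-r) by rw [div_div, sq]]
        gcongr
    _ = ∏ k ∈ Finset.range n, Real.exp (-(r ^ (k+1) / (1 - r))) := Real.exp_sum _ _
    _ ≤ ∏ k ∈ Finset.range n, ‖(1:ℂ) - q ^ (k+1)‖ := by
        apply Finset.prod_le_prod (fun k _ => (Real.exp_pos _).le) step1
    _ = ‖qPoch q n‖ := hnorm.symm

-- uniform bound on 1/|qPoch|
lemma euler_aux_term_bound (q : ℂ) (hq : ‖q‖ < 1) (s : ℂ) (n : ℕ) :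
    ‖s ^ n / qPoch q n‖ ≤ Real.exp (‖q‖ / (1 - ‖q‖) ^ 2) * ‖s‖ ^ n := by
  rw [norm_div, norm_pow]
  have hlb := euler_aux_qPoch_lb q hq n
  have hpos : (0:ℝ) < Real.exp (-(‖q‖ / (1 - ‖q‖) ^ 2)) := Real.exp_pos _
  have hP : (0:ℝ) < ‖qPoch q n‖ := lt_of_lt_of_le hpos hlb
  rw [div_le_iff₀ hP, mul_comm (Real.exp _) (‖s‖ ^ n), mul_assoc]
  have h1 : (1:ℝ) ≤ Real.exp (‖q‖ / (1 - ‖q‖) ^ 2) * ‖qPoch q n‖ := by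
    have := mul_le_mul_of_nonneg_left hlb (Real.exp_nonneg (‖q‖ / (1 - ‖q‖) ^ 2))
    calc (1:ℝ) = Real.exp (‖q‖ / (1 - ‖q‖) ^ 2) * Real.exp (-(‖q‖ / (1 - ‖q‖) ^ 2)) := by
          rw [← Real.exp_add]; simp
      _ ≤ Real.exp (‖q‖ / (1 - ‖q‖) ^ 2) * ‖qPoch q n‖ := this
  calc ‖s‖ ^ n = ‖s‖ ^ n * 1 := (mul_one _).symm
    _ ≤ ‖s‖ ^ n * (Real.exp (‖q‖ / (1 - ‖q‖) ^ 2) * ‖qPoch q n‖) :=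
        mul_le_mul_of_nonneg_left h1 (pow_nonneg (norm_nonneg s) n)

lemma euler_aux_summable (q : ℂ) (hq : ‖q‖ < 1) (s : ℂ) (hs : ‖s‖ < 1) :
    Summable (fun n : ℕ => s ^ n / qPoch q n) := by
  apply Summable.of_norm_bounded
    ((summable_geometric_of_lt_one (norm_nonneg s) hs).mul_left
      (Real.exp (‖q‖ / (1 - ‖q‖) ^ 2)))
  exact euler_aux_term_bound q hq s

-- functional equation for the sum
set_option maxHeartbeats 1000000 in
lemma euler_aux_S_funceq (q : ℂ) (hq : ‖q‖ < 1) (s : ℂ) (hs : ‖s‖ < 1) :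
    (1 - s) * ∑' n : ℕ, s ^ n / qPoch q n = ∑' n : ℕ, (q * s) ^ n / qPoch q n := by
  have hqs : ‖q * s‖ < 1 := by
    calc ‖q * s‖ = ‖q‖ * ‖s‖ := norm_mul q s
      _ ≤ 1 * ‖s‖ := mul_le_mul_of_nonneg_right hq.le (norm_nonneg s)
      _ < 1 := by rwa [one_mul]
  have hsum := euler_aux_summable q hq s hs
  have hsum1 : Summable (fun n : ℕ => s ^ (n+1) / qPoch q (n+1)) :=
    (summable_nat_add_iff 1).2 hsum
  have hsum2 : Summable (fun n : ℕ => s * (s ^ n / qPoch q n)) := hsum.mul_left s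
  have hterm : ∀ n : ℕ, (q * s) ^ (n+1) / qPoch q (n+1)
      = s ^ (n+1) / qPoch q (n+1) - s * (s ^ n / qPoch q n) := by
    intro n
    have hP : qPoch q (n+1) = qPoch q n * (1 - q ^ (n+1)) := Finset.prod_range_succ _ n
    have h0 : qPoch q n ≠ 0 := euler_aux_qPoch_ne q hq n
    have h1 : (1:ℂ) - q ^ (n+1) ≠ 0 := by
      apply euler_aux_factor_ne
      rw [norm_pow]
      calc ‖q‖ ^ (n + 1) ≤ ‖q‖ ^ 1 := by
            apply pow_le_pow_of_le_one (norm_nonneg q) hq.le; omega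
        _ < 1 := by simpa using hq
    rw [hP]
    field_simp
    ring
  calc (1 - s) * ∑' n : ℕ, s ^ n / qPoch q n
      = ∑' n : ℕ, s ^ n / qPoch q n - s * ∑' n : ℕ, s ^ n / qPoch q n := one_sub_mul _ _
    _ = (1 + ∑' n : ℕ, s ^ (n+1) / qPoch q (n+1)) - s * ∑' n : ℕ, s ^ n / qPoch q n := by
        congr 2
        rw [Summable.tsum_eq_zero_add hsum]
        norm_num [qPoch]
    _ = (1 + ∑' n : ℕ, s ^ (n+1) / qPoch q (n+1)) - ∑' n : ℕ, s * (s ^ n / qPoch q n) := by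
        rw [tsum_mul_left]
    _ = 1 + ((∑' n : ℕ, s ^ (n+1) / qPoch q (n+1)) - ∑' n : ℕ, s * (s ^ n / qPoch q n)) :=
        add_sub_assoc _ _ _
    _ = 1 + ∑' n : ℕ, (s ^ (n+1) / qPoch q (n+1) - s * (s ^ n / qPoch q n)) := by
        rw [Summable.tsum_sub hsum1 hsum2]
    _ = 1 + ∑' n : ℕ, (q * s) ^ (n+1) / qPoch q (n+1) := by
        congr 1; exact tsum_congr fun n => (hterm n).symm
    _ = ∑' n : ℕ, (q * s) ^ n / qPoch q n := by
        rw [Summable.tsum_eq_zero_add (euler_aux_summable q hq (q*s) hqs)]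
        simp [qPoch]

-- S s is close to 1 for small s
lemma euler_aux_S_sub_one (q : ℂ) (hq : ‖q‖ < 1) (s : ℂ) (hs : ‖s‖ < 1) :
    ‖(∑' n : ℕ, s ^ n / qPoch q n) - 1‖
      ≤ (Real.exp (‖q‖ / (1 - ‖q‖) ^ 2) * ‖s‖) * (1 - ‖s‖)⁻¹ := by
  have hsum := euler_aux_summable q hq s hs
  have hgeo : Summable (fun n : ℕ =>
      (Real.exp (‖q‖ / (1 - ‖q‖) ^ 2) * ‖s‖) * ‖s‖ ^ n) :=
    (summable_geometric_of_lt_one (norm_nonneg s) hs).mul_left _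
  have hb : ∀ n : ℕ, ‖s ^ (n+1) / qPoch q (n+1)‖
      ≤ (Real.exp (‖q‖ / (1 - ‖q‖) ^ 2) * ‖s‖) * ‖s‖ ^ n := by
    intro n
    calc ‖s ^ (n+1) / qPoch q (n+1)‖
        ≤ Real.exp (‖q‖ / (1 - ‖q‖) ^ 2) * ‖s‖ ^ (n+1) := euler_aux_term_bound q hq s (n+1)
      _ = (Real.exp (‖q‖ / (1 - ‖q‖) ^ 2) * ‖s‖) * ‖s‖ ^ n := by ring
  have hnorm : Summable (fun n : ℕ => ‖s ^ (n+1) / qPoch q (n+1)‖) :=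
    Summable.of_nonneg_of_le (fun n => norm_nonneg _) hb hgeo
  have he : (∑' n : ℕ, s ^ n / qPoch q n) - 1 = ∑' n : ℕ, s ^ (n+1) / qPoch q (n+1) := by
    rw [Summable.tsum_eq_zero_add hsum]
    norm_num [qPoch]
  rw [he]
  calc ‖∑' n : ℕ, s ^ (n+1) / qPoch q (n+1)‖
      ≤ ∑' n : ℕ, ‖s ^ (n+1) / qPoch q (n+1)‖ := norm_tsum_le_tsum_norm hnorm
    _ ≤ ∑' n : ℕ, (Real.exp (‖q‖ / (1 - ‖q‖) ^ 2) * ‖s‖) * ‖s‖ ^ n :=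
        Summable.tsum_le_tsum hb hnorm hgeo
    _ = (Real.exp (‖q‖ / (1 - ‖q‖) ^ 2) * ‖s‖) * (1 - ‖s‖)⁻¹ := by
        rw [tsum_mul_left, tsum_geometric_of_lt_one (norm_nonneg s) hs]

-- multipliability of the product
lemma euler_aux_mult (q : ℂ) (hq : ‖q‖ < 1) (s : ℂ)
    (hne : ∀ k : ℕ, (1 : ℂ) - s * q ^ k ≠ 0) :
    Multipliable (fun k : ℕ => (1 : ℂ) - s * q ^ k) := by
  have hlog : Summable (fun k : ℕ => Complex.log (1 - s * q ^ k)) := by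
    apply Summable.of_norm_bounded_eventually_nat (g := fun k => (3/2) * (‖s‖ * ‖q‖ ^ k))
    · exact ((summable_geometric_of_lt_one (norm_nonneg q) hq).mul_left ‖s‖).mul_left (3/2)
    · have h0 : Filter.Tendsto (fun k : ℕ => ‖s‖ * ‖q‖ ^ k) Filter.atTop (nhds 0) := by
        simpa using (tendsto_pow_atTop_nhds_zero_of_lt_one (norm_nonneg q) hq).const_mul ‖s‖
      have hev : ∀ᶠ k : ℕ in Filter.atTop, ‖s‖ * ‖q‖ ^ k ≤ 1/2 := by
        have := h0.eventually (eventually_le_nhds (by norm_num : (0:ℝ) < 1/2))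
        exact this
      filter_upwards [hev] with k hk
      have hz : ‖-(s * q ^ k)‖ ≤ 1/2 := by
        rw [norm_neg, norm_mul, norm_pow]; exact hk
      have := Complex.norm_log_one_add_half_le_self hz
      rw [show (1 : ℂ) + -(s * q ^ k) = 1 - s * q ^ k by ring] at this
      calc ‖Complex.log (1 - s * q ^ k)‖ ≤ 3/2 * ‖-(s * q ^ k)‖ := this
        _ = 3/2 * (‖s‖ * ‖q‖ ^ k) := by rw [norm_neg, norm_mul, norm_pow]
  exact Complex.multipliable_of_summable_log hlog

theorem euler_q_exponential (q t : ℂ) (hq : ‖q‖ < 1) (ht : ‖t‖ < 1) :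
    ∑' n : ℕ, t ^ n / qPoch q n = 1 / ∏' k : ℕ, (1 - t * q ^ k) := by
  set C := Real.exp (‖q‖ / (1 - ‖q‖) ^ 2) with hC
  set S : ℂ → ℂ := fun s => ∑' n : ℕ, s ^ n / qPoch q n with hSdef
  set P : ℂ := ∏' k : ℕ, (1 - t * q ^ k) with hPdef
  set Q : ℕ → ℂ := fun n => ∏ k ∈ Finset.range n, (1 - t * q ^ k) with hQdef
  have hpow_le : ∀ n : ℕ, ‖q‖ ^ n ≤ 1 := fun n => pow_le_one₀ (norm_nonneg q) hq.le
  have hnorm_pow : ∀ n : ℕ, ‖q ^ n * t‖ < 1 := by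
    intro n
    rw [norm_mul, norm_pow]
    calc ‖q‖ ^ n * ‖t‖ ≤ 1 * ‖t‖ :=
          mul_le_mul_of_nonneg_right (hpow_le n) (norm_nonneg t)
      _ < 1 := by rwa [one_mul]
  have hfacne : ∀ k : ℕ, (1 : ℂ) - t * q ^ k ≠ 0 := by
    intro k
    apply euler_aux_factor_ne
    rw [mul_comm]
    exact hnorm_pow k
  have hmult : Multipliable (fun k : ℕ => (1 : ℂ) - t * q ^ k) := euler_aux_mult q hq t hfacne
  have hQ : Filter.Tendsto Q Filter.atTop (nhds P) := hmult.hasProd.tendsto_prod_nat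
  have hiter : ∀ n : ℕ, S (q ^ n * t) = Q n * S t := by
    intro n
    induction n with
    | zero => simp [hSdef, hQdef]
    | succ n ih =>
      have h1 : q ^ (n+1) * t = q * (q ^ n * t) := by ring
      have h2 := euler_aux_S_funceq q hq (q ^ n * t) (hnorm_pow n)
      have h3 : S (q * (q ^ n * t)) = (1 - q ^ n * t) * S (q ^ n * t) := h2.symm
      have h4 : Q (n+1) = Q n * (1 - t * q ^ n) := Finset.prod_range_succ _ n
      rw [h1, h3, ih, h4]
      ring
  have hS1 : Filter.Tendsto (fun n : ℕ => S (q ^ n * t)) Filter.atTop (nhds (P * S t)) := by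
    have := hQ.mul_const (S t)
    apply this.congr
    intro n
    exact (hiter n).symm
  have hS2 : Filter.Tendsto (fun n : ℕ => S (q ^ n * t)) Filter.atTop (nhds 1) := by
    have hb : ∀ n : ℕ, ‖S (q ^ n * t) - 1‖ ≤ (C * (1 - ‖t‖)⁻¹) * (‖t‖ * ‖q‖ ^ n) := by
      intro n
      have h1 := euler_aux_S_sub_one q hq (q ^ n * t) (hnorm_pow n)
      have he : ‖q ^ n * t‖ = ‖q‖ ^ n * ‖t‖ := by rw [norm_mul, norm_pow]
      have h2 : (C * ‖q ^ n * t‖) * (1 - ‖q ^ n * t‖)⁻¹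
          ≤ (C * (1 - ‖t‖)⁻¹) * (‖t‖ * ‖q‖ ^ n) := by
        rw [he]
        have hle : ‖q‖ ^ n * ‖t‖ ≤ ‖t‖ := by
          calc ‖q‖ ^ n * ‖t‖ ≤ 1 * ‖t‖ :=
                mul_le_mul_of_nonneg_right (hpow_le n) (norm_nonneg t)
            _ = ‖t‖ := one_mul _
        have hinv : (1 - ‖q‖ ^ n * ‖t‖)⁻¹ ≤ (1 - ‖t‖)⁻¹ := by
          apply inv_anti₀ (by linarith)
          linarith
        calc (C * (‖q‖ ^ n * ‖t‖)) * (1 - ‖q‖ ^ n * ‖t‖)⁻¹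
            ≤ (C * (‖q‖ ^ n * ‖t‖)) * (1 - ‖t‖)⁻¹ := by
              apply mul_le_mul_of_nonneg_left hinv
              positivity
          _ = (C * (1 - ‖t‖)⁻¹) * (‖t‖ * ‖q‖ ^ n) := by ring
      exact le_trans h1 h2
    have hlim : Filter.Tendsto (fun n : ℕ => (C * (1 - ‖t‖)⁻¹) * (‖t‖ * ‖q‖ ^ n))
        Filter.atTop (nhds 0) := by
      have := ((tendsto_pow_atTop_nhds_zero_of_lt_one (norm_nonneg q) hq).const_mul
        ‖t‖).const_mul (C * (1 - ‖t‖)⁻¹)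
      simpa using this
    have h0 : Filter.Tendsto (fun n : ℕ => S (q ^ n * t) - 1) Filter.atTop (nhds 0) :=
      squeeze_zero_norm hb hlim
    have := h0.add_const 1
    simpa using this
  have hkey : P * S t = 1 := tendsto_nhds_unique hS1 hS2
  have hPne : P ≠ 0 := left_ne_zero_of_mul_eq_one hkey
  show S t = 1 / P
  rw [eq_div_iff hPne, mul_comm]
  exact hkey
end

section
/- For |q| < 1 and any t, the sum over n ≥ 0 of (-1)^n t^n q^{n(n-1)/2} / (q)_n equals the infinite product (t)_∞ = ∏_{k≥0}(1 - t q^k). (Euler's second q-exponential identity.) -/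
open scoped BigOperators

open Filter Finset Topology

set_option maxHeartbeats 1000000

noncomputable def eulerA (q x : ℂ) (n : ℕ) : ℂ :=
  (-1 : ℂ) ^ n * x ^ n * q ^ (n * (n - 1) / 2) / qPoch q n

lemma tri_succ (n : ℕ) : (n + 1) * ((n + 1) - 1) / 2 = n * (n - 1) / 2 + n := by
  cases n with
  | zero => rfl
  | succ k =>
    simp only [Nat.add_sub_cancel]
    have h1 : (k + 1 + 1) * (k + 1) = (k + 1) * k + 2 * (k + 1) := by ring
    have h2 : 2 ∣ (k + 1) * k := by
      simpa [mul_comm] using (Nat.even_mul_succ_self k).two_dvd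
    omega

lemma one_sub_pow_ne {q : ℂ} (hq : ‖q‖ < 1) (k : ℕ) : (1 : ℂ) - q ^ (k + 1) ≠ 0 := by
  intro h
  have h1 : q ^ (k + 1) = 1 := by linear_combination -h
  have : ‖q ^ (k + 1)‖ < 1 := by
    rw [norm_pow]
    calc ‖q‖ ^ (k + 1) ≤ ‖q‖ ^ 1 :=
      pow_le_pow_of_le_one (norm_nonneg q) hq.le (by omega)
    _ < 1 := by simpa using hq
  rw [h1] at this; simp at this

lemma qPoch_ne {q : ℂ} (hq : ‖q‖ < 1) (n : ℕ) : qPoch q n ≠ 0 :=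
  Finset.prod_ne_zero_iff.mpr fun k _ => one_sub_pow_ne hq k

lemma qPoch_succ (q : ℂ) (n : ℕ) : qPoch q (n + 1) = qPoch q n * (1 - q ^ (n + 1)) :=
  Finset.prod_range_succ _ n

lemma eulerA_succ {q : ℂ} (hq : ‖q‖ < 1) (x : ℂ) (n : ℕ) :
    eulerA q x (n + 1) = eulerA q x n * (-x * q ^ n / (1 - q ^ (n + 1))) := by
  unfold eulerA
  rw [tri_succ, pow_add, qPoch_succ]
  have h1 := qPoch_ne hq n
  have h2 := one_sub_pow_ne hq n
  field_simp
  ring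

lemma summable_norm_eulerA {q : ℂ} (hq : ‖q‖ < 1) (x : ℂ) :
    Summable fun n => ‖eulerA q x n‖ := by
  by_cases hx : x = 0
  · apply summable_of_ne_finset_zero (s := {0})
    intro n hn
    have hn1 : 1 ≤ n := by simpa using Nat.one_le_iff_ne_zero.mpr (by simpa using hn)
    simp [eulerA, hx, zero_pow (by omega : n ≠ 0)]
  by_cases hq0 : q = 0
  · apply summable_of_ne_finset_zero (s := {0, 1})
    intro n hn
    have hn2 : 2 ≤ n := by
      simp only [Finset.mem_insert, Finset.mem_singleton] at hn; omega
    have : n * (n - 1) / 2 ≠ 0 := by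
      have : 2 * 1 ≤ n * (n - 1) := Nat.mul_le_mul hn2 (by omega)
      omega
    simp [eulerA, hq0, zero_pow this]
  · have hne : ∀ n, eulerA q x n ≠ 0 := by
      intro n
      unfold eulerA
      apply div_ne_zero _ (qPoch_ne hq n)
      exact mul_ne_zero (mul_ne_zero (pow_ne_zero _ (by norm_num)) (pow_ne_zero _ hx))
        (pow_ne_zero _ hq0)
    apply summable_of_ratio_test_tendsto_lt_one (l := 0) one_pos
      (Filter.Eventually.of_forall fun n => by simp [hne n])
    have key : ∀ n : ℕ, ‖(eulerA q x (n + 1))‖ / ‖(eulerA q x n)‖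
        = ‖x‖ * ‖q‖ ^ n / ‖(1 : ℂ) - q ^ (n + 1)‖ := by
      intro n
      rw [eulerA_succ hq x n, norm_mul, mul_comm, mul_div_assoc,
        div_self (norm_ne_zero_iff.mpr (hne n)), mul_one]
      simp [norm_div, norm_mul, norm_pow]
    have hnum : Filter.Tendsto (fun n : ℕ => ‖x‖ * ‖q‖ ^ n) atTop (𝓝 0) := by
      simpa using (tendsto_pow_atTop_nhds_zero_of_lt_one (norm_nonneg q) hq).const_mul ‖x‖
    have hden : Filter.Tendsto (fun n : ℕ => ‖(1 : ℂ) - q ^ (n + 1)‖) atTop (𝓝 1) := by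
      have hp : Filter.Tendsto (fun n : ℕ => q ^ (n + 1)) atTop (𝓝 0) :=
        (tendsto_pow_atTop_nhds_zero_of_norm_lt_one hq).comp (tendsto_add_atTop_nat 1)
      have h1 : Filter.Tendsto (fun n : ℕ => (1 : ℂ) - q ^ (n + 1)) atTop (𝓝 (1 - 0)) :=
        tendsto_const_nhds.sub hp
      simpa using h1.norm
    have htend : Filter.Tendsto (fun n : ℕ => ‖x‖ * ‖q‖ ^ n / ‖(1 : ℂ) - q ^ (n + 1)‖)
        atTop (𝓝 0) := by simpa [Pi.div_def] using hnum.div hden one_ne_zero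
    exact htend.congr fun n => by rw [norm_norm, norm_norm]; exact (key n).symm

noncomputable def eulerS (q x : ℂ) : ℂ := ∑' n : ℕ, eulerA q x n

lemma eulerA_zero (q x : ℂ) : eulerA q x 0 = 1 := by simp [eulerA, qPoch]

lemma eulerFE {q : ℂ} (hq : ‖q‖ < 1) (x : ℂ) : eulerS q x = (1 - x) * eulerS q (q * x) := by
  have h1 : Summable (eulerA q x) := (summable_norm_eulerA hq x).of_norm
  have h2 : Summable (eulerA q (q * x)) := (summable_norm_eulerA hq (q * x)).of_norm
  have key : ∀ n : ℕ, eulerA q x (n + 1) - eulerA q (q * x) (n + 1)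
      = -x * eulerA q (q * x) n := by
    intro n
    unfold eulerA
    rw [tri_succ, pow_add, qPoch_succ]
    have hp := qPoch_ne hq n
    have ho := one_sub_pow_ne hq n
    field_simp
    ring
  have hmain : eulerS q x - eulerS q (q * x) = -x * eulerS q (q * x) := by
    calc eulerS q x - eulerS q (q * x)
        = ∑' n : ℕ, (eulerA q x n - eulerA q (q * x) n) := (Summable.tsum_sub h1 h2).symm
      _ = (eulerA q x 0 - eulerA q (q * x) 0)
          + ∑' n : ℕ, (eulerA q x (n + 1) - eulerA q (q * x) (n + 1)) :=
            Summable.tsum_eq_zero_add (h1.sub h2)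
      _ = ∑' n : ℕ, -x * eulerA q (q * x) n := by
            simp only [eulerA_zero, sub_self, zero_add, key]
      _ = -x * eulerS q (q * x) := tsum_mul_left
  unfold eulerS at hmain ⊢
  linear_combination hmain

lemma eulerS_iter {q : ℂ} (hq : ‖q‖ < 1) (t : ℂ) (N : ℕ) :
    eulerS q t = (∏ k ∈ Finset.range N, (1 - t * q ^ k)) * eulerS q (t * q ^ N) := by
  induction N with
  | zero => simp
  | succ N ih =>
    rw [ih, eulerFE hq (t * q ^ N), Finset.prod_range_succ]
    have : q * (t * q ^ N) = t * q ^ (N + 1) := by ring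
    rw [this]
    ring

lemma eulerS_tendsto_one {q : ℂ} (hq : ‖q‖ < 1) (t : ℂ) :
    Filter.Tendsto (fun N : ℕ => eulerS q (t * q ^ N)) atTop (𝓝 1) := by
  have hb : ∀ N : ℕ, ‖eulerS q (t * q ^ N) - 1‖
      ≤ ‖q‖ ^ N * ∑' n : ℕ, ‖eulerA q t (n + 1)‖ := by
    intro N
    set x := t * q ^ N with hxdef
    have hsx : Summable (eulerA q x) := (summable_norm_eulerA hq x).of_norm
    have h0 : eulerS q x = 1 + ∑' n : ℕ, eulerA q x (n + 1) := by
      unfold eulerS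
      rw [Summable.tsum_eq_zero_add hsx, eulerA_zero]
    rw [h0]
    simp only [add_sub_cancel_left]
    have hsx1 : Summable fun n : ℕ => ‖eulerA q x (n + 1)‖ :=
      (summable_nat_add_iff 1).2 (summable_norm_eulerA hq x)
    have hst1 : Summable fun n : ℕ => ‖q‖ ^ N * ‖eulerA q t (n + 1)‖ :=
      ((summable_nat_add_iff 1).2 (summable_norm_eulerA hq t)).mul_left _
    calc ‖∑' n : ℕ, eulerA q x (n + 1)‖ ≤ ∑' n : ℕ, ‖eulerA q x (n + 1)‖ :=
        norm_tsum_le_tsum_norm hsx1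
      _ ≤ ∑' n : ℕ, ‖q‖ ^ N * ‖eulerA q t (n + 1)‖ := by
          apply Summable.tsum_le_tsum _ hsx1 hst1
          intro n
          have hxe : ‖eulerA q x (n + 1)‖ = ‖q‖ ^ (N * (n + 1)) * ‖eulerA q t (n + 1)‖ := by
            unfold eulerA
            rw [hxdef]
            rw [mul_pow, ← pow_mul]
            simp only [norm_div, norm_mul, norm_pow, norm_neg, norm_one, one_pow]
            ring
          rw [hxe]
          apply mul_le_mul_of_nonneg_right _ (norm_nonneg _)
          calc ‖q‖ ^ (N * (n + 1)) ≤ ‖q‖ ^ N :=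
            pow_le_pow_of_le_one (norm_nonneg q) hq.le (by nlinarith)
          _ ≤ ‖q‖ ^ N := le_refl _
      _ = ‖q‖ ^ N * ∑' n : ℕ, ‖eulerA q t (n + 1)‖ := tsum_mul_left
  have hq0 : Filter.Tendsto (fun N : ℕ => ‖q‖ ^ N * ∑' n : ℕ, ‖eulerA q t (n + 1)‖)
      atTop (𝓝 0) := by
    simpa using (tendsto_pow_atTop_nhds_zero_of_lt_one (norm_nonneg q) hq).mul_const
      (∑' n : ℕ, ‖eulerA q t (n + 1)‖)
  have := squeeze_zero_norm hb hq0
  have h2 : Filter.Tendsto (fun N : ℕ => (eulerS q (t * q ^ N) - 1) + 1) atTop (𝓝 (0 + 1)) :=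
    this.add tendsto_const_nhds
  simpa using h2

theorem euler_second_q_exponential (q t : ℂ) (hq : ‖q‖ < 1) :
    ∑' n : ℕ, (-1 : ℂ) ^ n * t ^ n * q ^ (n * (n - 1) / 2) / qPoch q n
      = ∏' k : ℕ, (1 - t * q ^ k) := by
  have hS : (∑' n : ℕ, (-1 : ℂ) ^ n * t ^ n * q ^ (n * (n - 1) / 2) / qPoch q n)
      = eulerS q t := rfl
  rw [hS]
  by_cases hzero : ∃ k0 : ℕ, (1 : ℂ) - t * q ^ k0 = 0
  · obtain ⟨k0, hk0⟩ := hzero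
    have hL : eulerS q t = 0 := by
      rw [eulerS_iter hq t (k0 + 1),
        Finset.prod_eq_zero (Finset.self_mem_range_succ k0) hk0, zero_mul]
    have hp : HasProd (fun k : ℕ => (1 : ℂ) - t * q ^ k) 0 := by
      rw [HasProd]
      refine Filter.Tendsto.congr' ?_ tendsto_const_nhds
      filter_upwards [Filter.eventually_ge_atTop ({k0} : Finset ℕ)] with s hs
      exact (Finset.prod_eq_zero (hs (Finset.mem_singleton_self k0)) hk0).symm
    rw [hL, hp.tprod_eq]
  · push_neg at hzero
    have hlog : Summable fun n : ℕ => Complex.log (1 - t * q ^ n) := by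
      apply Summable.of_norm_bounded_eventually_nat (g := fun n => 3 / 2 * (‖t‖ * ‖q‖ ^ n))
      · exact ((summable_geometric_of_lt_one (norm_nonneg q) hq).mul_left ‖t‖).mul_left (3 / 2)
      · have hev : ∀ᶠ n : ℕ in atTop, ‖t‖ * ‖q‖ ^ n ≤ 1 / 2 := by
          have h1 : Filter.Tendsto (fun n : ℕ => ‖t‖ * ‖q‖ ^ n) atTop (𝓝 0) := by
            simpa using (tendsto_pow_atTop_nhds_zero_of_lt_one (norm_nonneg q) hq).const_mul ‖t‖
          exact h1.eventually_le_const (by norm_num)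
        filter_upwards [hev] with n hn
        have h2 : ‖-(t * q ^ n)‖ ≤ 1 / 2 := by
          rw [norm_neg, norm_mul, norm_pow]; exact hn
        have h3 : (1 : ℂ) - t * q ^ n = 1 + -(t * q ^ n) := by ring
        rw [h3]
        calc ‖Complex.log (1 + -(t * q ^ n))‖ ≤ 3 / 2 * ‖-(t * q ^ n)‖ :=
            Complex.norm_log_one_add_half_le_self h2
          _ = 3 / 2 * (‖t‖ * ‖q‖ ^ n) := by rw [norm_neg, norm_mul, norm_pow]
    have hm : Multipliable fun k : ℕ => (1 : ℂ) - t * q ^ k :=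
      Complex.multipliable_of_summable_log hlog
    have hprod : Filter.Tendsto (fun N : ℕ => ∏ k ∈ Finset.range N, ((1 : ℂ) - t * q ^ k))
        atTop (𝓝 (∏' k : ℕ, ((1 : ℂ) - t * q ^ k))) := hm.hasProd.tendsto_prod_nat
    have hmul : Filter.Tendsto
        (fun N : ℕ => (∏ k ∈ Finset.range N, ((1 : ℂ) - t * q ^ k)) * eulerS q (t * q ^ N))
        atTop (𝓝 ((∏' k : ℕ, ((1 : ℂ) - t * q ^ k)) * 1)) :=
      hprod.mul (eulerS_tendsto_one hq t)
    have hconst : Filter.Tendsto (fun _ : ℕ => eulerS q t) atTop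
        (𝓝 ((∏' k : ℕ, ((1 : ℂ) - t * q ^ k)) * 1)) :=
      hmul.congr fun N => (eulerS_iter hq t N).symm
    have := tendsto_nhds_unique tendsto_const_nhds hconst
    simpa using this
end
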